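/- A set S ⊆ ℝ^n = ℝ^{n-1} × ℝ is contained in the graph of some Lipschitz function φ : ℝ^{n-1} → ℝ if and only if there exist δ > 0 and a Lipschitz function f : ℝ^n → ℝ such that S ⊆ {x : f(x) = 0} and f(x + t e_n) − f(x) ≥ δ t for all x ∈ ℝ^n and t ≥ 0. -/

import Mathlib

variable {n : ℕ}

noncomputable def sn (w : EuclideanSpace ℝ (Fin n)) (t : ℝ) : EuclideanSpace ℝ (Fin (n+1)) :=
  WithLp.toLp 2 (Fin.snoc w t : Fin (n+1) → ℝ)

lemma sn_add (w : EuclideanSpace ℝ (Fin n)) (t s : ℝ) :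
    sn w t + s • EuclideanSpace.single (Fin.last n) (1:ℝ) = sn w (t + s) := by
  ext i
  simp only [PiLp.add_apply, PiLp.smul_apply, EuclideanSpace.single_apply, smul_eq_mul, sn]
  induction i using Fin.lastCases with
  | last => simp
  | cast j => simp [(Fin.castSucc_lt_last j).ne]

lemma dist_sn (w w' : EuclideanSpace ℝ (Fin n)) (t : ℝ) :
    dist (sn w t) (sn w' t) = dist w w' := by
  rw [EuclideanSpace.dist_eq, EuclideanSpace.dist_eq]
  congr 1
  rw [Fin.sum_univ_castSucc]
  simp [sn]

lemma abs_apply_le_dist (x y : EuclideanSpace ℝ (Fin (n+1))) (i : Fin (n+1)) :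
    |x i - y i| ≤ dist x y := by
  rw [EuclideanSpace.dist_eq]
  have h1 : |x i - y i| = Real.sqrt ((x i - y i)^2) := by
    rw [Real.sqrt_sq_eq_abs]
  rw [h1]
  apply Real.sqrt_le_sqrt
  have := Finset.single_le_sum (f := fun j => dist (x j) (y j) ^ 2)
    (fun j _ => sq_nonneg _) (Finset.mem_univ i)
  simpa [Real.dist_eq] using this

lemma lipschitz_eval_last : LipschitzWith 1 (fun x : EuclideanSpace ℝ (Fin (n+1)) => x (Fin.last n)) := by
  apply LipschitzWith.of_dist_le_mul
  intro x y
  simpa [Real.dist_eq] using abs_apply_le_dist x y (Fin.last n)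

noncomputable def initL : EuclideanSpace ℝ (Fin (n+1)) →L[ℝ] EuclideanSpace ℝ (Fin n) :=
  LinearMap.toContinuousLinearMap
    { toFun := fun x => WithLp.toLp 2 (Fin.init x : Fin n → ℝ)
      map_add' := fun _ _ => rfl
      map_smul' := fun _ _ => rfl }

lemma initL_apply (x : EuclideanSpace ℝ (Fin (n+1))) (j : Fin n) :
    initL x j = x j.castSucc := rfl

lemma initL_sn (w : EuclideanSpace ℝ (Fin n)) (t : ℝ) : initL (sn w t) = w := by
  ext j
  simp [initL_apply, sn]

lemma sn_last (w : EuclideanSpace ℝ (Fin n)) (t : ℝ) : sn w t (Fin.last n) = t :=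
  Fin.snoc_last (α := fun _ => ℝ) _ _

lemma sn_init (x : EuclideanSpace ℝ (Fin (n+1))) : sn (initL x) (x (Fin.last n)) = x := by
  ext i
  exact congrFun (Fin.snoc_init_self x) i

theorem fwd (n : ℕ) (S : Set (EuclideanSpace ℝ (Fin (n + 1))))
    (h : ∃ φ : EuclideanSpace ℝ (Fin n) → ℝ, (∃ K : NNReal, LipschitzWith K φ) ∧
      S ⊆ {p : EuclideanSpace ℝ (Fin (n + 1)) |
        ∃ w : EuclideanSpace ℝ (Fin n),
          p = (WithLp.toLp 2 (Fin.snoc w (φ w) : Fin (n + 1) → ℝ) : EuclideanSpace ℝ (Fin (n + 1)))}) :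
    (∃ δ : ℝ, 0 < δ ∧ ∃ f : EuclideanSpace ℝ (Fin (n + 1)) → ℝ,
      (∃ K : NNReal, LipschitzWith K f) ∧
      S ⊆ {x : EuclideanSpace ℝ (Fin (n + 1)) | f x = 0} ∧
      ∀ x : EuclideanSpace ℝ (Fin (n + 1)), ∀ t : ℝ, 0 ≤ t →
        δ * t ≤ f (x + t • EuclideanSpace.single (Fin.last n) (1 : ℝ)) - f x) := by
  obtain ⟨φ, ⟨K, hK⟩, hsub⟩ := h
  refine ⟨1, one_pos, fun p => p (Fin.last n) - φ (initL p), ⟨1 + K * ‖(initL (n := n))‖₊, ?_⟩, ?_, ?_⟩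
  · exact lipschitz_eval_last.sub (hK.comp initL.lipschitz)
  · intro p hp
    obtain ⟨w, hw⟩ := hsub hp
    have : p = sn w (φ w) := hw
    simp [Set.mem_setOf_eq, this, sn_last, initL_sn]
  · intro x t ht
    have hx := sn_init x
    have h2 : x + t • EuclideanSpace.single (Fin.last n) (1:ℝ) = sn (initL x) (x (Fin.last n) + t) := by
      rw [← hx, sn_add, sn_last, initL_sn]
    simp only [h2]
    rw [sn_last, initL_sn]
    nlinarith [sq_nonneg t]

theorem bwd (n : ℕ) (S : Set (EuclideanSpace ℝ (Fin (n + 1))))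
    (h : ∃ δ : ℝ, 0 < δ ∧ ∃ f : EuclideanSpace ℝ (Fin (n + 1)) → ℝ,
      (∃ K : NNReal, LipschitzWith K f) ∧
      S ⊆ {x : EuclideanSpace ℝ (Fin (n + 1)) | f x = 0} ∧
      ∀ x : EuclideanSpace ℝ (Fin (n + 1)), ∀ t : ℝ, 0 ≤ t →
        δ * t ≤ f (x + t • EuclideanSpace.single (Fin.last n) (1 : ℝ)) - f x) :
    (∃ φ : EuclideanSpace ℝ (Fin n) → ℝ, (∃ K : NNReal, LipschitzWith K φ) ∧
      S ⊆ {p : EuclideanSpace ℝ (Fin (n + 1)) |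
        ∃ w : EuclideanSpace ℝ (Fin n),
          p = (WithLp.toLp 2 (Fin.snoc w (φ w) : Fin (n + 1) → ℝ) : EuclideanSpace ℝ (Fin (n + 1)))}) := by
  obtain ⟨δ, hδ, f, ⟨K, hK⟩, hS, hmono⟩ := h
  set h : EuclideanSpace ℝ (Fin n) → ℝ → ℝ := fun w t => f (sn w t) with hh
  -- monotonicity of slices
  have mono : ∀ w a b, a ≤ b → δ * (b - a) ≤ h w b - h w a := by
    intro w a b hab
    have := hmono (sn w a) (b - a) (by linarith)
    rwa [sn_add, add_sub_cancel] at this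
  have strict : ∀ w, StrictMono (h w) := by
    intro w a b hab
    have := mono w a b hab.le
    nlinarith
  have cont : ∀ w, Continuous (h w) := by
    intro w
    have heq : (fun t => sn w t) = fun t : ℝ => sn w 0 + t • EuclideanSpace.single (Fin.last n) (1:ℝ) := by
      funext t
      rw [sn_add, zero_add]
    have : Continuous fun t => sn w t := by
      rw [heq]
      exact continuous_const.add (continuous_id.smul continuous_const)
    exact hK.continuous.comp this
  -- existence of a zero on each slice
  have hex : ∀ w, ∃ t, h w t = 0 := by
    intro w
    set c := h w 0 with hc
    set T := |c| / δ with hT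
    have hT0 : 0 ≤ T := div_nonneg (abs_nonneg _) hδ.le
    have hup : 0 ≤ h w T := by
      have := mono w 0 T hT0
      have hδT : δ * T = |c| := by
        rw [hT]; field_simp
      nlinarith [le_abs_self c, neg_abs_le c]
    have hdown : h w (-T) ≤ 0 := by
      have := mono w (-T) 0 (by linarith)
      have hδT : δ * (0 - (-T)) = |c| := by
        rw [hT]; field_simp; ring
      nlinarith [le_abs_self c, neg_abs_le c]
    have : (0:ℝ) ∈ Set.Icc (h w (-T)) (h w T) := ⟨hdown, hup⟩
    obtain ⟨t, _, ht⟩ := intermediate_value_Icc (by linarith : -T ≤ T) (cont w).continuousOn this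
    exact ⟨t, ht⟩
  set φ : EuclideanSpace ℝ (Fin n) → ℝ := fun w => Classical.choose (hex w) with hφdef
  have hφ : ∀ w, h w (φ w) = 0 := fun w => Classical.choose_spec (hex w)
  -- Lipschitz bound for φ
  have key : ∀ w w', φ w' ≤ φ w → δ * (φ w - φ w') ≤ (K : ℝ) * dist w w' := by
    intro w w' hle
    have h1 : δ * (φ w - φ w') ≤ h w' (φ w) - h w' (φ w') := mono w' _ _ hle
    rw [hφ w'] at h1
    have h2 : h w' (φ w) - h w (φ w) ≤ dist (h w' (φ w)) (h w (φ w)) := by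
      rw [Real.dist_eq]; exact le_abs_self _
    have h3 : dist (h w' (φ w)) (h w (φ w)) ≤ (K : ℝ) * dist (sn w' (φ w)) (sn w (φ w)) :=
      hK.dist_le_mul _ _
    rw [dist_sn, dist_comm w' w] at h3
    have h4 := hφ w
    linarith
  have hlip : LipschitzWith (K * (Real.toNNReal δ)⁻¹) φ := by
    apply LipschitzWith.of_dist_le_mul
    intro w w'
    have hcoe : ((K * (Real.toNNReal δ)⁻¹ : NNReal) : ℝ) = (K : ℝ) / δ := by
      push_cast
      rw [Real.coe_toNNReal δ hδ.le]
      ring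
    rw [hcoe, Real.dist_eq]
    rcases le_total (φ w') (φ w) with hle | hle
    · rw [abs_of_nonneg (by linarith)]
      have := key w w' hle
      rw [div_mul_eq_mul_div, le_div_iff₀ hδ]
      nlinarith [dist_nonneg (x := w) (y := w')]
    · rw [abs_of_nonpos (by linarith)]
      have := key w' w hle
      rw [dist_comm w' w] at this
      rw [div_mul_eq_mul_div, le_div_iff₀ hδ]
      nlinarith [dist_nonneg (x := w) (y := w')]
  refine ⟨φ, ⟨_, hlip⟩, ?_⟩
  intro p hp
  have hfp : f p = 0 := hS hp
  set w := initL p with hw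
  have hzero : h w (p (Fin.last n)) = 0 := by
    rw [hh]
    simp only []
    rw [sn_init p]
    exact hfp
  have hinj := (strict w).injective
  have : p (Fin.last n) = φ w := hinj (by rw [hzero, hφ w])
  refine ⟨w, ?_⟩
  rw [← sn_init p, this]
  rfl

/-- A set `S ⊆ ℝ^{n+1} = ℝ^n × ℝ` is contained in the graph of some Lipschitz
function `φ : ℝ^n → ℝ` if and only if there exist `δ > 0` and a Lipschitz function
`f : ℝ^{n+1} → ℝ` such that `S ⊆ {f = 0}` and `f(x + t eₙ) - f(x) ≥ δ t` for all `x` and `t ≥ 0`,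
where `eₙ` is the last standard basis vector. -/
theorem subset_lipschitz_graph_iff_level_set
    (n : ℕ) (S : Set (EuclideanSpace ℝ (Fin (n + 1)))) :
    (∃ φ : EuclideanSpace ℝ (Fin n) → ℝ, (∃ K : NNReal, LipschitzWith K φ) ∧
      S ⊆ {p : EuclideanSpace ℝ (Fin (n + 1)) |
        ∃ w : EuclideanSpace ℝ (Fin n),
          p = (WithLp.toLp 2 (Fin.snoc w (φ w) : Fin (n + 1) → ℝ) : EuclideanSpace ℝ (Fin (n + 1)))}) ↔
    (∃ δ : ℝ, 0 < δ ∧ ∃ f : EuclideanSpace ℝ (Fin (n + 1)) → ℝ,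
      (∃ K : NNReal, LipschitzWith K f) ∧
      S ⊆ {x : EuclideanSpace ℝ (Fin (n + 1)) | f x = 0} ∧
      ∀ x : EuclideanSpace ℝ (Fin (n + 1)), ∀ t : ℝ, 0 ≤ t →
        δ * t ≤ f (x + t • EuclideanSpace.single (Fin.last n) (1 : ℝ)) - f x) := by
  exact ⟨fun h => fwd n S h, fun h => bwd n S h⟩
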